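/- Branch adjustment lemma: Let (H, R, B) be a correct subgraph branching rule and let B* ⊆ V(H) be nonempty. Define B' = {B ∈ B : B* ⊄ B and B* ≠ B} ∪ {B*} (i.e., keep branches not containing B*, and add B*). Then (H, R, B') is a correct subgraph branching rule. -/

import Mathlib

/-- `G` restricted to the vertex set `A` contains some member of the family `F`
as a (not necessarily induced) subgraph. -/
def ContainsCopyOn {ι : Type} {W : ι → Type} (F : ∀ i, SimpleGraph (W i))
    {V : Type} (G : SimpleGraph V) (A : Set V) : Prop :=
  ∃ i, ∃ f : W i → V, Function.Injective f ∧ (∀ w, f w ∈ A) ∧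
    ∀ a b, (F i).Adj a b → G.Adj (f a) (f b)

/-- Correctness of the subgraph branching rule `(H, R, Bs)` for `F`-Subgraph
Vertex Deletion: whenever the rule applies to a (finite) graph `G` via an
induced embedding `φ` such that red vertices only have neighbors inside the
copy, and `S` is a solution for `G`, then there is a solution `S'` with
`|S'| ≤ |S|` containing `φ(B)` for some branch `B`. -/
def RuleCorrect {ι : Type} {W : ι → Type} (F : ∀ i, SimpleGraph (W i))
    {VH : Type} (H : SimpleGraph VH) (R : Set VH) (Bs : Set (Set VH)) : Prop :=
  ∀ (V : Type) (_ : Fintype V) (G : SimpleGraph V) (φ : VH → V),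
    Function.Injective φ →
    (∀ a b : VH, H.Adj a b ↔ G.Adj (φ a) (φ b)) →
    (∀ r ∈ R, ∀ u : V, G.Adj (φ r) u → u ∈ Set.range φ) →
    ∀ S : Set V, ¬ ContainsCopyOn F G Sᶜ →
      ∃ S' : Set V, ∃ B ∈ Bs,
        ¬ ContainsCopyOn F G S'ᶜ ∧ S'.ncard ≤ S.ncard ∧ φ '' B ⊆ S'

theorem stmt13 {ι : Type} [Fintype ι] [Nonempty ι] {W : ι → Type} [∀ i, Fintype (W i)]
    (F : ∀ i, SimpleGraph (W i)) (hFconn : ∀ i, (F i).Connected)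
    {VH : Type} [Fintype VH] (H : SimpleGraph VH) (hHconn : H.Connected)
    (hHbumpy : ContainsCopyOn F H Set.univ)
    (R : Set VH) (Bs : Set (Set VH))
    (hcor : RuleCorrect F H R Bs)
    (Bstar : Set VH) (hBstar : Bstar.Nonempty) :
    RuleCorrect F H R ({Bb ∈ Bs | ¬ Bstar ⊆ Bb} ∪ {Bstar}) := by
  intro V _ G φ hinj hind hred S hS
  obtain ⟨S', B, hB, h1, h2, h3⟩ := hcor V ‹_› G φ hinj hind hred S hS
  by_cases hsub : Bstar ⊆ B
  · exact ⟨S', Bstar, Or.inr rfl, h1, h2, (Set.image_mono (f := φ) hsub).trans h3⟩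
  · exact ⟨S', B, Or.inl ⟨hB, hsub⟩, h1, h2, h3⟩
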